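/- Let Θ ⊆ ℝ be a nondegenerate open interval and f : Θ → ℝ be a function. Then f is ε-increasing (i.e., f(u) ≤ f(v) + ε for all u < v in Θ) if and only if there exists an increasing function g : Θ → ℝ such that sup_{u ∈ Θ} |f(u) − g(u)| ≤ ε/2. -/

import Mathlib

open Set

theorem stmt8 (Θ : Set ℝ) (hopen : IsOpen Θ) (hconn : Θ.OrdConnected) (hnt : Θ.Nontrivial)
    (ε : ℝ) (hε : 0 < ε) (f : ℝ → ℝ) :
    (∀ u ∈ Θ, ∀ v ∈ Θ, u < v → f u ≤ f v + ε) ↔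
      ∃ g : ℝ → ℝ, MonotoneOn g Θ ∧ ∀ u ∈ Θ, |f u - g u| ≤ ε / 2 := by
  constructor
  · intro hf
    refine ⟨fun u => sSup (f '' (Θ ∩ Iic u)) - ε / 2, ?_, ?_⟩
    · intro u hu v hv huv
      have hsub : f '' (Θ ∩ Iic u) ⊆ f '' (Θ ∩ Iic v) :=
        image_mono (inter_subset_inter_right _ (Iic_subset_Iic.mpr huv))
      have hne : (f '' (Θ ∩ Iic u)).Nonempty := ⟨f u, u, ⟨hu, le_refl u⟩, rfl⟩
      have hbdd : BddAbove (f '' (Θ ∩ Iic v)) := by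
        refine ⟨f v + ε, ?_⟩
        rintro _ ⟨w, ⟨hw, hwv⟩, rfl⟩
        rcases eq_or_lt_of_le (mem_Iic.mp hwv) with rfl | h
        · linarith
        · exact hf w hw v hv h
      have := csSup_le_csSup hbdd hne hsub
      linarith
    · intro u hu
      have hne : (f '' (Θ ∩ Iic u)).Nonempty := ⟨f u, u, ⟨hu, le_refl u⟩, rfl⟩
      have hbdd : BddAbove (f '' (Θ ∩ Iic u)) := by
        refine ⟨f u + ε, ?_⟩
        rintro _ ⟨w, ⟨hw, hwu⟩, rfl⟩
        rcases eq_or_lt_of_le (mem_Iic.mp hwu) with rfl | h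
        · linarith
        · exact hf w hw u hu h
      have h1 : f u ≤ sSup (f '' (Θ ∩ Iic u)) :=
        le_csSup hbdd ⟨u, ⟨hu, le_refl u⟩, rfl⟩
      have h2 : sSup (f '' (Θ ∩ Iic u)) ≤ f u + ε := by
        apply csSup_le hne
        rintro _ ⟨w, ⟨hw, hwu⟩, rfl⟩
        rcases eq_or_lt_of_le (mem_Iic.mp hwu) with rfl | h
        · linarith
        · exact hf w hw u hu h
      rw [abs_le]
      constructor <;> linarith
  · rintro ⟨g, hg, hfg⟩ u hu v hv huv
    have h1 := abs_le.mp (hfg u hu)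
    have h2 := abs_le.mp (hfg v hv)
    have := hg hu hv huv.le
    linarith [h1.2, h2.1]
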